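/- For every h = (h_0, …, h_ν) ∈ ℂ^{ν+1} whose autocorrelations c_k = Σ_{m=0}^{ν−k} h_m · conj(h_{m+k}), k = 1, …, ν, are not all zero, the Lebesgue measure of D(h) = { u ∈ [−π, π] : |H(e^{−ju})|² > ‖h‖² } satisfies |D(h)| ≥ (1/2) · ( 2(2ν+1) Σ_{k=1}^{ν} |c_k|² )^{−1/2} · ∫_{−π}^{π} | |H(e^{−ju})|² − ‖h‖² | du. -/

import Mathlib

open MeasureTheory Finset

noncomputable def Hf (ν : ℕ) (h : ℕ → ℂ) (u : ℝ) : ℂ :=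
  ∑ m ∈ Finset.range (ν + 1), h m * Complex.exp (-(Complex.I * m * u))

noncomputable def norm2 (ν : ℕ) (h : ℕ → ℂ) : ℝ :=
  ∑ m ∈ Finset.range (ν + 1), ‖h m‖ ^ 2

noncomputable def ac (ν : ℕ) (h : ℕ → ℂ) (k : ℕ) : ℂ :=
  ∑ m ∈ Finset.range (ν + 1 - k), h m * (starRingEnd ℂ) (h (m + k))

noncomputable def fH (ν : ℕ) (h : ℕ → ℂ) (u : ℝ) : ℝ :=
  ‖Hf ν h u‖ ^ 2 - norm2 ν h

def Dset (ν : ℕ) (h : ℕ → ℂ) : Set ℝ :=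
  {u | u ∈ Set.Icc (-Real.pi) Real.pi ∧ 0 < fH ν h u}


set_option linter.unnecessarySeqFocus false
set_option linter.unusedTactic false

lemma sum_filter_lt_eq {M : Type*} [AddCommMonoid M] (N : ℕ) (F : ℕ → ℕ → M) :
    ∑ p ∈ (Finset.range N ×ˢ Finset.range N).filter (fun p => p.1 < p.2), F p.1 p.2
    = ∑ k ∈ Finset.Icc 1 (N - 1), ∑ m ∈ Finset.range (N - k), F m (m + k) := by
  rw [Finset.sum_sigma']
  refine Finset.sum_nbij' (fun p => ⟨p.2 - p.1, p.1⟩) (fun q => (q.2, q.2 + q.1)) ?_ ?_ ?_ ?_ ?_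
  · rintro ⟨a, b⟩ hp
    simp only [mem_filter, mem_product, mem_range] at hp
    simp only [mem_sigma, mem_Icc, mem_range]
    omega
  · rintro ⟨k, m⟩ hq
    simp only [mem_sigma, mem_Icc, mem_range] at hq
    simp only [mem_filter, mem_product, mem_range]
    omega
  · rintro ⟨a, b⟩ hp
    simp only [mem_filter, mem_product, mem_range] at hp
    simp only []
    congr 1 <;> omega
  · rintro ⟨k, m⟩ hq
    simp only [mem_sigma, mem_Icc, mem_range] at hq
    simp only []
    congr 1 <;> omega
  · rintro ⟨a, b⟩ hp
    simp only [mem_filter, mem_product, mem_range] at hp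
    simp only []
    congr 1
    omega

lemma double_sum_split {M : Type*} [AddCommMonoid M] (N : ℕ) (F : ℕ → ℕ → M) :
    ∑ m ∈ Finset.range N, ∑ n ∈ Finset.range N, F m n
    = (∑ m ∈ Finset.range N, F m m)
      + ∑ k ∈ Finset.Icc 1 (N - 1), ∑ m ∈ Finset.range (N - k), (F m (m + k) + F (m + k) m) := by
  rw [← Finset.sum_product']
  set s := Finset.range N ×ˢ Finset.range N with hs
  have h1 : ∑ p ∈ s, F p.1 p.2
      = ∑ p ∈ s.filter (fun p => p.1 < p.2), F p.1 p.2
        + ∑ p ∈ s.filter (fun p => ¬ p.1 < p.2), F p.1 p.2 :=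
    (Finset.sum_filter_add_sum_filter_not s _ _).symm
  have h2 : ∑ p ∈ s.filter (fun p => ¬ p.1 < p.2), F p.1 p.2
      = ∑ p ∈ (s.filter (fun p => ¬ p.1 < p.2)).filter (fun p => p.2 < p.1), F p.1 p.2
        + ∑ p ∈ (s.filter (fun p => ¬ p.1 < p.2)).filter (fun p => ¬ p.2 < p.1), F p.1 p.2 :=
    (Finset.sum_filter_add_sum_filter_not _ _ _).symm
  have e1 : (s.filter (fun p => ¬ p.1 < p.2)).filter (fun p => p.2 < p.1)
      = s.filter (fun p => p.2 < p.1) := by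
    rw [Finset.filter_filter]
    apply Finset.filter_congr
    intro p _
    omega
  have e2 : (s.filter (fun p => ¬ p.1 < p.2)).filter (fun p => ¬ p.2 < p.1)
      = s.filter (fun p => p.1 = p.2) := by
    rw [Finset.filter_filter]
    apply Finset.filter_congr
    intro p _
    omega
  have hdiag : ∑ p ∈ s.filter (fun p => p.1 = p.2), F p.1 p.2
      = ∑ m ∈ Finset.range N, F m m := by
    refine Finset.sum_nbij' (fun p => p.1) (fun m => (m, m)) ?_ ?_ ?_ ?_ ?_
    · rintro ⟨a, b⟩ hp
      simp only [hs, mem_filter, mem_product, mem_range] at hp ⊢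
      exact hp.1.1
    · intro m hm
      simp only [hs, mem_filter, mem_product, mem_range] at hm ⊢
      exact ⟨⟨hm, hm⟩, trivial⟩
    · rintro ⟨a, b⟩ hp
      have hab : a = b := by
        simp only [hs, mem_filter, mem_product, mem_range] at hp
        exact hp.2
      subst hab; rfl
    · intro m hm; rfl
    · rintro ⟨a, b⟩ hp
      have hab : a = b := by
        simp only [hs, mem_filter, mem_product, mem_range] at hp
        exact hp.2
      subst hab; rfl
  have hgt : ∑ p ∈ s.filter (fun p => p.2 < p.1), F p.1 p.2
      = ∑ k ∈ Finset.Icc 1 (N - 1), ∑ m ∈ Finset.range (N - k), F (m + k) m := by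
    have hswap : ∑ p ∈ s.filter (fun p => p.2 < p.1), F p.1 p.2
        = ∑ p ∈ s.filter (fun p => p.1 < p.2), F p.2 p.1 := by
      refine Finset.sum_nbij' (fun p => (p.2, p.1)) (fun p => (p.2, p.1)) ?_ ?_ ?_ ?_ ?_ <;>
        rintro ⟨a, b⟩ hp <;>
        simp only [hs, mem_filter, mem_product, mem_range] at hp ⊢ <;> tauto
    rw [hswap, sum_filter_lt_eq N (fun m n => F n m)]
  rw [h1, h2, e1, e2, hdiag, hgt, sum_filter_lt_eq N F]
  simp only [Finset.sum_add_distrib]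
  abel

lemma prod_rep (ν : ℕ) (h : ℕ → ℂ) (u : ℝ) :
    Hf ν h u * (starRingEnd ℂ) (Hf ν h u)
    = (norm2 ν h : ℂ) + ∑ k ∈ Finset.Icc 1 ν, ((ac ν h k) * Complex.exp (Complex.I * k * u)
        + (starRingEnd ℂ) ((ac ν h k) * Complex.exp (Complex.I * k * u))) := by
  have hconj : (starRingEnd ℂ) (Hf ν h u)
      = ∑ n ∈ Finset.range (ν + 1), (starRingEnd ℂ) (h n) * Complex.exp (Complex.I * n * u) := by
    rw [Hf, map_sum]
    refine Finset.sum_congr rfl fun n _ => ?_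
    rw [map_mul, ← Complex.exp_conj]
    congr 1
    simp [map_mul]
  set G : ℕ → ℕ → ℂ := fun m n => h m * (starRingEnd ℂ) (h n)
      * Complex.exp (Complex.I * ((n : ℂ) - (m : ℂ)) * u) with hG
  have hprod : Hf ν h u * (starRingEnd ℂ) (Hf ν h u)
      = ∑ m ∈ Finset.range (ν + 1), ∑ n ∈ Finset.range (ν + 1), G m n := by
    rw [hconj, Hf, Finset.sum_mul_sum]
    refine Finset.sum_congr rfl fun m _ => Finset.sum_congr rfl fun n _ => ?_
    rw [hG, mul_mul_mul_comm, ← Complex.exp_add]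
    congr 2
    ring
  rw [hprod, double_sum_split]
  congr 1
  · rw [norm2, Complex.ofReal_sum]
    refine Finset.sum_congr rfl fun m _ => ?_
    rw [hG]
    simp [Complex.sq_norm, ← Complex.mul_conj, Complex.ofReal_pow]
  · simp only [Nat.add_sub_cancel]
    refine Finset.sum_congr rfl fun k hk => ?_
    have h1 : ∀ m, G m (m + k) = h m * (starRingEnd ℂ) (h (m + k)) * Complex.exp (Complex.I * k * u) := by
      intro m
      rw [hG]
      congr 2
      push_cast
      ring_nf
    have h2 : ∀ m, G (m + k) m = (starRingEnd ℂ) (G m (m + k)) := by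
      intro m
      simp only [hG]
      simp only [map_mul, Complex.conj_conj, ← Complex.exp_conj, map_sub, map_natCast,
        Complex.conj_I, Complex.conj_ofReal]
      have earg : Complex.I * ((m : ℂ) - ((m + k : ℕ) : ℂ)) * (u : ℂ)
          = -Complex.I * (((m + k : ℕ) : ℂ) - (m : ℂ)) * (u : ℂ) := by
        push_cast
        ring
      rw [earg]
      ring
    rw [Finset.sum_add_distrib]
    congr 1
    · rw [ac, Finset.sum_mul]
      exact Finset.sum_congr rfl fun m _ => (h1 m)
    · simp only [h2]
      rw [← map_sum]
      congr 1
      rw [ac, Finset.sum_mul]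
      exact Finset.sum_congr rfl fun m _ => h1 m

lemma fH_rep (ν : ℕ) (h : ℕ → ℂ) (u : ℝ) :
    fH ν h u = ∑ k ∈ Finset.Icc 1 ν, 2 * ((ac ν h k) * Complex.exp (Complex.I * k * u)).re := by
  have h0 : (‖Hf ν h u‖) ^ 2 = (Hf ν h u * (starRingEnd ℂ) (Hf ν h u)).re := by
    rw [Complex.mul_conj, Complex.sq_norm]
    simp
  rw [fH, h0, prod_rep]
  simp only [Complex.add_re, Complex.ofReal_re, Complex.re_sum]
  rw [add_sub_cancel_left]
  refine Finset.sum_congr rfl fun k _ => ?_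
  simp only [Complex.conj_re]
  ring

lemma contfH (ν : ℕ) (h : ℕ → ℂ) : Continuous (fH ν h) := by
  have : (fH ν h) = fun u : ℝ => ∑ k ∈ Finset.Icc 1 ν,
      2 * ((ac ν h k) * Complex.exp (Complex.I * k * u)).re := funext (fH_rep ν h)
  rw [this]
  refine continuous_finset_sum _ fun k _ => (continuous_const.mul (Complex.continuous_re.comp
    (continuous_const.mul (Complex.continuous_exp.comp ?_))))
  exact continuous_const.mul Complex.continuous_ofReal

lemma fH_bound (ν : ℕ) (h : ℕ → ℂ) (u : ℝ) :
    |fH ν h u| ≤ Real.sqrt (2 * (2 * ν + 1) *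
      ∑ k ∈ Finset.Icc 1 ν, ‖ac ν h k‖ ^ 2) := by
  set S := ∑ k ∈ Finset.Icc 1 ν, ‖ac ν h k‖ ^ 2 with hS
  have hS0 : 0 ≤ S := Finset.sum_nonneg fun k _ => by positivity
  have step1 : |fH ν h u| ≤ ∑ k ∈ Finset.Icc 1 ν, 2 * ‖ac ν h k‖ := by
    rw [fH_rep]
    refine (Finset.abs_sum_le_sum_abs _ _).trans (Finset.sum_le_sum fun k _ => ?_)
    rw [abs_mul, abs_two]
    refine mul_le_mul_of_nonneg_left ?_ (by norm_num)
    refine (Complex.abs_re_le_norm _).trans ?_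
    rw [norm_mul, Complex.norm_exp]
    have : (Complex.I * k * u).re = 0 := by simp
    rw [this, Real.exp_zero, mul_one]
  have step2 : (∑ k ∈ Finset.Icc 1 ν, 2 * ‖ac ν h k‖) ^ 2
      ≤ 2 * (2 * ν + 1) * S := by
    have card_eq : (Finset.Icc 1 ν).card = ν := by simp
    have cs := sq_sum_le_card_mul_sum_sq (s := Finset.Icc 1 ν)
      (f := fun k => ‖ac ν h k‖)
    calc (∑ k ∈ Finset.Icc 1 ν, 2 * ‖ac ν h k‖) ^ 2
        = 4 * (∑ k ∈ Finset.Icc 1 ν, ‖ac ν h k‖) ^ 2 := by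
          rw [← Finset.mul_sum]; ring
      _ ≤ 4 * ((Finset.Icc 1 ν).card * ∑ k ∈ Finset.Icc 1 ν, ‖ac ν h k‖ ^ 2) := by
          linarith
      _ = 4 * ν * S := by rw [card_eq, hS]; ring
      _ ≤ 2 * (2 * ν + 1) * S := by nlinarith
  have hnn : 0 ≤ ∑ k ∈ Finset.Icc 1 ν, 2 * ‖ac ν h k‖ :=
    Finset.sum_nonneg fun k _ => by positivity
  refine step1.trans ?_
  rw [Real.le_sqrt hnn (by positivity)]
  exact step2

lemma fH_integral_zero (ν : ℕ) (h : ℕ → ℂ) :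
    ∫ u in (-Real.pi)..Real.pi, fH ν h u = 0 := by
  have hrw : ∀ u : ℝ, fH ν h u = ∑ k ∈ Finset.Icc 1 ν,
      2 * ((ac ν h k) * Complex.exp (Complex.I * k * u)).re := fH_rep ν h
  rw [intervalIntegral.integral_congr (g := fun u => ∑ k ∈ Finset.Icc 1 ν,
      2 * ((ac ν h k) * Complex.exp (Complex.I * k * u)).re) (fun u _ => hrw u)]
  rw [intervalIntegral.integral_finset_sum]
  · refine Finset.sum_eq_zero fun k hk => ?_
    have hk1 : 1 ≤ k := (Finset.mem_Icc.mp hk).1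
    have hcont : Continuous fun u : ℝ => (ac ν h k) * Complex.exp (Complex.I * k * u) :=
      continuous_const.mul (Complex.continuous_exp.comp
        (continuous_const.mul Complex.continuous_ofReal))
    rw [intervalIntegral.integral_const_mul]
    have hre : ∫ u in (-Real.pi)..Real.pi, ((ac ν h k) * Complex.exp (Complex.I * k * u)).re
        = Complex.reCLM (∫ u in (-Real.pi)..Real.pi, (ac ν h k) * Complex.exp (Complex.I * k * u)) := by
      rw [← ContinuousLinearMap.intervalIntegral_comp_comm _ (hcont.intervalIntegrable _ _)]
      rfl
    rw [hre]
    have hc : Complex.I * (k : ℂ) ≠ 0 :=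
      mul_ne_zero Complex.I_ne_zero (Nat.cast_ne_zero.mpr (by omega))
    have hzero : (∫ u in (-Real.pi)..Real.pi, (ac ν h k) * Complex.exp (Complex.I * k * u)) = 0 := by
      rw [intervalIntegral.integral_const_mul, integral_exp_mul_complex hc]
      have harg : Complex.I * (k : ℂ) * ((-Real.pi : ℝ) : ℂ) + (k : ℂ) * (2 * Real.pi * Complex.I)
          = Complex.I * (k : ℂ) * ((Real.pi : ℝ) : ℂ) := by
        push_cast
        ring
      have hnum : Complex.exp (Complex.I * (k : ℂ) * ((Real.pi : ℝ) : ℂ))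
          - Complex.exp (Complex.I * (k : ℂ) * ((-Real.pi : ℝ) : ℂ)) = 0 := by
        rw [← harg, Complex.exp_add, Complex.exp_nat_mul_two_pi_mul_I, mul_one, sub_self]
      rw [hnum, zero_div, mul_zero]
    rw [hzero]
    simp
  · intro k hk
    exact (continuous_const.mul (Complex.continuous_re.comp (continuous_const.mul
      (Complex.continuous_exp.comp (continuous_const.mul
        Complex.continuous_ofReal))))).intervalIntegrable _ _

/-- Equation (14): for every `h` whose autocorrelations are not all zero,
`|D(h)| ≥ (1/2) (2(2ν+1) Σ_{k=1}^{ν} |c_k|²)^{-1/2} ∫_{-π}^{π} |f(h, u)| du`. -/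
theorem measure_Dset_ge_integral_bound (ν : ℕ) (h : ℕ → ℂ)
    (hc : ∃ k ∈ Finset.Icc 1 ν, ac ν h k ≠ 0) :
    (1 / 2) * (Real.sqrt (2 * (2 * ν + 1) *
        ∑ k ∈ Finset.Icc 1 ν, ‖ac ν h k‖ ^ 2))⁻¹ *
      (∫ u in (-Real.pi)..Real.pi, |fH ν h u|) ≤
    (volume (Dset ν h)).toReal := by
  set S := ∑ k ∈ Finset.Icc 1 ν, ‖ac ν h k‖ ^ 2 with hSdef
  set M := Real.sqrt (2 * (2 * ν + 1) * S) with hMdef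
  set t := (volume (Dset ν h)).toReal with htdef
  obtain ⟨k0, hk0, hk0ne⟩ := hc
  have hSpos : 0 < S := by
    refine Finset.sum_pos' (fun k _ => by positivity) ⟨k0, hk0, ?_⟩
    have : ‖ac ν h k0‖ ≠ 0 := by
      simpa using hk0ne
    positivity
  have hMpos : 0 < M := Real.sqrt_pos.mpr (by positivity)
  have hab : (-Real.pi) ≤ Real.pi := by linarith [Real.pi_pos]
  set p : ℝ → ℝ := fun u => max (fH ν h u) 0 with hpdef
  have hcontp : Continuous p := (contfH ν h).max continuous_const
  have habs_eq : ∀ u, |fH ν h u| = 2 * p u - fH ν h u := by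
    intro u
    rcases le_total 0 (fH ν h u) with hu | hu
    · rw [abs_of_nonneg hu, hpdef]; simp only [max_eq_left hu]; ring
    · rw [abs_of_nonpos hu, hpdef]; simp only [max_eq_right hu]; ring
  have hIabs : (∫ u in (-Real.pi)..Real.pi, |fH ν h u|)
      = 2 * ∫ u in (-Real.pi)..Real.pi, p u := by
    rw [intervalIntegral.integral_congr (g := fun u => 2 * p u - fH ν h u)
      (fun u _ => habs_eq u)]
    rw [intervalIntegral.integral_sub (by exact (continuous_const.mul hcontp).intervalIntegrable _ _ : IntervalIntegrable (fun u => 2 * p u) volume (-Real.pi) Real.pi)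
      ((contfH ν h).intervalIntegrable _ _), fH_integral_zero, sub_zero,
      intervalIntegral.integral_const_mul]
  have hDmeas : MeasurableSet (Dset ν h) := by
    have heq : Dset ν h = Set.Icc (-Real.pi) Real.pi ∩ (fH ν h) ⁻¹' Set.Ioi 0 := rfl
    rw [heq]
    exact measurableSet_Icc.inter ((contfH ν h).measurable measurableSet_Ioi)
  have hDfin : volume (Dset ν h) ≠ ⊤ := by
    refine ne_top_of_le_ne_top (ne_of_lt measure_Icc_lt_top)
      (measure_mono fun u hu => hu.1)
  have hIp : (∫ u in (-Real.pi)..Real.pi, p u) ≤ M * t := by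
    rw [intervalIntegral.integral_of_le hab]
    have hind : IntegrableOn ((Dset ν h).indicator fun _ => M) (Set.Ioc (-Real.pi) Real.pi) :=
      (integrableOn_const measure_Ioc_lt_top.ne).indicator hDmeas
    calc ∫ u in Set.Ioc (-Real.pi) Real.pi, p u
        ≤ ∫ u in Set.Ioc (-Real.pi) Real.pi, (Dset ν h).indicator (fun _ => M) u := by
          refine setIntegral_mono_on (hcontp.integrableOn_Ioc) hind measurableSet_Ioc ?_
          intro u hu
          by_cases hD : u ∈ Dset ν h
          · rw [Set.indicator_of_mem hD]
            refine max_le ?_ hMpos.le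
            exact (le_abs_self _).trans (fH_bound ν h u)
          · rw [Set.indicator_of_notMem hD]
            have hle : fH ν h u ≤ 0 := by
              by_contra hgt
              exact hD ⟨Set.mem_Icc_of_Ioc hu, lt_of_not_ge hgt⟩
            simp [hpdef, hle]
      _ = M * (volume (Set.Ioc (-Real.pi) Real.pi ∩ Dset ν h)).toReal := by
          rw [setIntegral_indicator hDmeas, setIntegral_const, smul_eq_mul, mul_comm, measureReal_def]
      _ ≤ M * t := by
          refine mul_le_mul_of_nonneg_left ?_ hMpos.le
          exact ENNReal.toReal_mono hDfin (measure_mono Set.inter_subset_right)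
  calc (1 / 2) * M⁻¹ * (∫ u in (-Real.pi)..Real.pi, |fH ν h u|)
      ≤ (1 / 2) * M⁻¹ * (2 * (M * t)) := by
        refine mul_le_mul_of_nonneg_left ?_ (by positivity)
        rw [hIabs]
        linarith
    _ = t := by field_simp
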